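/- arXiv:1306.0771 — 2 statements merged into one kernel-verified Lean document; each statement's English description precedes it below -/
import Mathlib

section
/- For every sequence I of length n, Eag(I) − Maj(I) ≤ n/2 − 1/2, and there exist sequences (a,a,a_1,a_2,a_3,a,a_4,a,...) achieving Eag(I) − Maj(I) = n/2 − 3 + 4/n for even n; hence Min(Maj, Eag) = −1/2 and, combined with Max(Maj,Eag) = 1 witnessed by E_n, l(Maj, Eag) = [−1/2, 1]. -/
open scoped BigOperators

noncomputable section

/-- frequency of item `a` in sequence `I` -/
def freq (I : List ℕ) (a : ℕ) : ℝ := (I.count a : ℝ) / (I.length : ℝ)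

/-- profit (aggregate frequency) of buffer sequence `S` against input `I` -/
def profit (I S : List ℕ) : ℝ := (S.map (freq I)).sum

/-- Naive algorithm: buffers every arriving item. -/
def naiP (I : List ℕ) : ℝ := profit I I

/-- Buffers of the eager algorithm: buffer each arriving item until the first
repeated item (two equal consecutive items), then keep it forever. -/
def eagRun : List ℕ → List ℕ
  | [] => []
  | [x] => [x]
  | x :: y :: rest =>
      if x = y then x :: List.replicate (rest.length + 1) x
      else x :: eagRun (y :: rest)

def eagP (I : List ℕ) : ℝ := profit I (eagRun I)

/-- One step of the Majority algorithm on state (buffer, counter). -/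
def majStep (s : ℕ × ℕ) (a : ℕ) : ℕ × ℕ :=
  if s.2 = 0 then (a, 1)
  else if a = s.1 then (s.1, s.2 + 1)
  else (s.1, s.2 - 1)

def majBuffers (I : List ℕ) : List ℕ :=
  ((List.scanl majStep ((0 : ℕ), (0 : ℕ)) I).tail).map Prod.fst

def majP (I : List ℕ) : ℝ := profit I (majBuffers I)

/-- A valid offline buffer schedule: at each step the buffer holds either the
currently arriving item or the previously buffered item (the first buffered
item must be the first arriving item). -/
def ValidSched (I S : List ℕ) : Prop :=
  S.length = I.length ∧
    ∀ i, i < S.length →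
      S.getD i 0 = I.getD i 0 ∨ (0 < i ∧ S.getD i 0 = S.getD (i - 1) 0)

/-- Optimal offline profit. -/
def optP (I : List ℕ) : ℝ := sSup {x | ∃ S, ValidSched I S ∧ x = profit I S}

/-- Worst-permutation value of an algorithm's profit. -/
def worstP (f : List ℕ → ℝ) (I : List ℕ) : ℝ := sInf {x | ∃ J, J.Perm I ∧ x = f J}

/-- E_n = a,a,b,b,...,b with n-2 copies of b. -/
def Eseq (n a b : ℕ) : List ℕ := a :: a :: List.replicate (n - 2) b

/-- W_n = a_1,a_0,a_2,a_0,... with item 0 playing the role of a_0. -/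
def Wseq (n : ℕ) : List ℕ :=
  ((List.range (n / 2)).flatMap fun i => [i + 1, 0]) ++
    (if n % 2 = 1 then [n / 2 + 1] else [])

/-- W'_n = a_1,...,a_⌈n/2⌉,a_0,...,a_0 with ⌊n/2⌋ copies of a_0 = 0. -/
def Wseq' (n : ℕ) : List ℕ :=
  ((List.range ((n + 1) / 2)).map (· + 1)) ++ List.replicate (n / 2) 0

/-- I_n = ⌈n/2⌉ copies of a_0 = 0 followed by ⌊n/2⌋ distinct items. -/
def Iseq (n : ℕ) : List ℕ :=
  List.replicate ((n + 1) / 2) 0 ++ (List.range (n / 2)).map (· + 1)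

/-- D(I): the items of `I` listed in nondecreasing order of frequency. -/
def Dsort (I : List ℕ) : List ℕ :=
  List.insertionSort (fun x y => I.count x ≤ I.count y) I

/-- The interleaving permutation a'_1, a'_n, a'_2, a'_{n-1}, ... of a list. -/
def interleave : List ℕ → List ℕ
  | [] => []
  | x :: xs => x :: interleave xs.reverse
termination_by l => l.length
decreasing_by set_option linter.unnecessarySimpa false in simpa using Nat.lt_succ_self xs.length

/-- max over sequences of length n of f(I) - g(I). -/
def maxDiff (f g : List ℕ → ℝ) (n : ℕ) : ℝ :=
  sSup {d | ∃ I : List ℕ, I.length = n ∧ d = f I - g I}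

/-- min over sequences of length n of f(I) - g(I). -/
def minDiff (f g : List ℕ → ℝ) (n : ℕ) : ℝ :=
  sInf {d | ∃ I : List ℕ, I.length = n ∧ d = f I - g I}

/-- A deterministic online algorithm for the single-buffer frequent items
problem: the buffer after each nonempty prefix is either the arriving item or
the previous buffer content. -/
structure OnlineAlg where
  buf : List ℕ → ℕ
  first : ∀ x, buf [x] = x
  step : ∀ l x, l ≠ [] → buf (l ++ [x]) = x ∨ buf (l ++ [x]) = buf l

/-- Profit of an online algorithm on input `I`. -/
def oprofit (A : OnlineAlg) (I : List ℕ) : ℝ :=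
  ∑ t ∈ Finset.range I.length, freq I (A.buf (I.take (t + 1)))

end


section Aux

open List

/-! ### Basic profit lemmas -/

lemma profit_eq (I S : List ℕ) :
    profit I S = ((S.map fun b => (I.count b : ℝ)).sum) / I.length := by
  induction S with
  | nil => simp [profit]
  | cons b T ih =>
    simp only [profit, map_cons, sum_cons] at ih ⊢
    rw [ih, freq, add_div]

lemma sum_counts_le (I S : List ℕ) (M : ℕ) (h : ∀ b ∈ S, I.count b ≤ M) :
    ((S.map fun b => (I.count b : ℝ)).sum) ≤ S.length * M := by
  have := List.sum_le_card_nsmul (S.map fun b => (I.count b : ℝ)) (M : ℝ) ?_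
  · simpa [nsmul_eq_mul] using this
  · intro x hx
    simp only [mem_map] at hx
    obtain ⟨b, hb, rfl⟩ := hx
    exact_mod_cast h b hb

lemma sum_counts_ge (I S : List ℕ) (a : ℕ) (h : ∀ b ∈ S, 1 ≤ I.count b) :
    (S.count a : ℝ) * (I.count a) + ((S.length : ℝ) - S.count a) ≤
      ((S.map fun b => (I.count b : ℝ)).sum) := by
  induction S with
  | nil => simp
  | cons b T ih =>
    have hT : ∀ b ∈ T, 1 ≤ I.count b := fun x hx => h x (mem_cons_of_mem _ hx)
    have ihT := ih hT
    have hb : 1 ≤ I.count b := h b mem_cons_self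
    have hb' : (1 : ℝ) ≤ I.count b := by exact_mod_cast hb
    by_cases hba : b = a
    · subst hba
      simp only [map_cons, sum_cons, count_cons_self, length_cons]
      push_cast
      linarith
    · rw [count_cons_of_ne (by exact fun h' => hba h')]
      simp only [map_cons, sum_cons, length_cons]
      push_cast
      linarith

lemma profit_nonneg (I S : List ℕ) : 0 ≤ profit I S := by
  apply List.sum_nonneg
  intro x hx
  simp only [mem_map] at hx
  obtain ⟨b, _, rfl⟩ := hx
  exact div_nonneg (by positivity) (by positivity)

lemma profit_le_length (I S : List ℕ) : profit I S ≤ S.length := by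
  have := List.sum_le_card_nsmul (S.map (freq I)) 1 ?_
  · simpa [profit, nsmul_eq_mul] using this
  · intro x hx
    simp only [mem_map] at hx
    obtain ⟨b, _, rfl⟩ := hx
    rcases Nat.eq_zero_or_pos I.length with h0 | h0
    · simp [freq, h0]
    · rw [freq, div_le_one (by exact_mod_cast h0)]
      exact_mod_cast (List.count_le_length (a := b) (l := I))

/-! ### Eag lemmas -/

lemma eagRun_length : ∀ I : List ℕ, (eagRun I).length = I.length
  | [] => by simp [eagRun]
  | [x] => by simp [eagRun]
  | x :: y :: rest => by
      rw [eagRun]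
      split
      · simp
      · simp [eagRun_length (y :: rest)]

lemma eagRun_subset : ∀ I : List ℕ, ∀ b ∈ eagRun I, b ∈ I
  | [x] => by simp [eagRun]
  | x :: y :: rest => by
      rw [eagRun]
      split
      · intro b hb
        rcases List.mem_cons.1 hb with rfl | hb
        · exact List.mem_cons_self
        · rcases List.eq_of_mem_replicate hb with rfl
          exact List.mem_cons_self
      · intro b hb
        rcases List.mem_cons.1 hb with rfl | hb
        · exact List.mem_cons_self
        · exact List.mem_cons_of_mem _ (eagRun_subset (y :: rest) b hb)
  | [] => by simp [eagRun]

/-! ### Maj lemmas -/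

lemma majBuffers_length (I : List ℕ) : (majBuffers I).length = I.length := by
  simp [majBuffers, List.length_scanl]

lemma maj_mem_aux (I : List ℕ) : ∀ st : ℕ × ℕ,
    ∀ y ∈ ((List.scanl majStep st I).tail.map Prod.fst),
      y ∈ I ∨ (st.2 ≠ 0 ∧ y = st.1) := by
  induction I with
  | nil => simp
  | cons x rest ih =>
    intro st y hy
    rw [List.scanl_cons] at hy
    set st' := majStep st x with hst'
    rw [List.tail_cons] at hy
    have hscan : List.scanl majStep st' rest = st' :: (List.scanl majStep st' rest).tail := by
      cases rest <;> simp [List.scanl]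
    rw [hscan, map_cons] at hy
    rcases (mem_cons).1 hy with rfl | hy
    · -- y = st'.1
      by_cases h0 : st.2 = 0
      · left
        simp [hst', majStep, h0]
      · right
        constructor
        · exact h0
        · simp only [hst', majStep, h0, if_false]
          split <;> rfl
    · rcases ih st' y hy with h | ⟨h1, h2⟩
      · exact Or.inl (mem_cons_of_mem _ h)
      · by_cases h0 : st.2 = 0
        · left
          rw [h2]
          simp [hst', majStep, h0]
        · right
          refine ⟨h0, ?_⟩
          rw [h2]
          simp only [hst', majStep, h0, if_false]
          split <;> rfl

lemma majBuffers_subset (I : List ℕ) : ∀ b ∈ majBuffers I, b ∈ I := by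
  intro b hb
  rcases maj_mem_aux I ((0 : ℕ), (0 : ℕ)) b hb with h | ⟨h1, _⟩
  · exact h
  · exact absurd rfl h1

/-- potential for the Boyer–Moore analysis -/
def phiBM (a : ℕ) (s : ℕ × ℕ) : ℤ := if s.1 = a then (s.2 : ℤ) else -(s.2 : ℤ)

lemma phiBM_step_ge (a x : ℕ) (st : ℕ × ℕ) :
    phiBM a st + (if x = a then 1 else -1) ≤ phiBM a (majStep st x) := by
  obtain ⟨b, c⟩ := st
  simp only [phiBM, majStep]
  rcases Nat.eq_zero_or_pos c with rfl | hc
  · simp only [if_pos rfl]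
    split_ifs <;> simp_all <;> omega
  · have : ¬ c = 0 := by omega
    simp only [this, if_false]
    split_ifs <;> simp_all <;> push_cast <;> omega

lemma phiBM_step_le (a x : ℕ) (st : ℕ × ℕ) :
    phiBM a (majStep st x) ≤ phiBM a st + 1 := by
  obtain ⟨b, c⟩ := st
  simp only [phiBM, majStep]
  rcases Nat.eq_zero_or_pos c with rfl | hc
  · simp only [if_pos rfl]
    split_ifs <;> simp_all <;> omega
  · have : ¬ c = 0 := by omega
    simp only [this, if_false]
    split_ifs <;> simp_all <;> push_cast <;> omega

lemma phiBM_pos_buf (a : ℕ) (s : ℕ × ℕ) (h : 1 ≤ phiBM a s) : s.1 = a := by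
  by_contra hne
  simp only [phiBM, hne, if_false] at h
  omega

lemma phiBM_fold_ge (a : ℕ) (I : List ℕ) : ∀ st : ℕ × ℕ,
    phiBM a st + 2 * (I.count a : ℤ) - I.length ≤ phiBM a (I.foldl majStep st) := by
  induction I with
  | nil => simp
  | cons x rest ih =>
    intro st
    have h1 := phiBM_step_ge a x st
    have h2 := ih (majStep st x)
    rw [List.foldl_cons, List.count_cons, List.length_cons]
    by_cases hxa : x = a
    · rw [if_pos hxa] at h1
      rw [if_pos (by simp [hxa])]
      push_cast
      omega
    · rw [if_neg hxa] at h1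
      rw [if_neg (by simp [hxa])]
      push_cast
      omega

lemma count_buf_ge_aux (a : ℕ) (I : List ℕ) : ∀ st : ℕ × ℕ,
    phiBM a (I.foldl majStep st) - max (phiBM a st) 0 ≤
      ((((List.scanl majStep st I).tail.map Prod.fst)).count a : ℤ) := by
  induction I with
  | nil =>
    intro st
    simp only [List.foldl_nil, List.scanl, List.tail_cons, List.map_nil, List.count_nil]
    have h1 := le_max_left (phiBM a st) 0
    push_cast
    omega
  | cons x rest ih =>
    intro st
    have ihr := ih (majStep st x)
    rw [List.scanl_cons, List.tail_cons]
    have hscan : List.scanl majStep (majStep st x) rest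
        = majStep st x :: (List.scanl majStep (majStep st x) rest).tail := by
      cases rest <;> simp [List.scanl]
    rw [hscan, List.map_cons, List.count_cons, List.foldl_cons]
    have hle := phiBM_step_le a x st
    have hA := le_max_left (phiBM a st) 0
    have hB := le_max_right (phiBM a st) 0
    by_cases hbq : (majStep st x).1 = a
    · rw [if_pos (by simp [hbq])]
      have key : max (phiBM a (majStep st x)) 0 ≤ max (phiBM a st) 0 + 1 :=
        max_le (by omega) (by omega)
      push_cast
      omega
    · rw [if_neg (by simp [hbq])]
      have hnp : phiBM a (majStep st x) ≤ 0 := by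
        by_contra hc
        exact hbq (phiBM_pos_buf a _ (by omega))
      have key : max (phiBM a (majStep st x)) 0 ≤ max (phiBM a st) 0 := by
        rw [max_eq_right hnp]
        omega
      push_cast
      omega

lemma maj_count_ge (I : List ℕ) (a : ℕ) :
    2 * (I.count a : ℤ) - I.length ≤ ((majBuffers I).count a : ℤ) := by
  have h1 := count_buf_ge_aux a I ((0 : ℕ), (0 : ℕ))
  have h2 := phiBM_fold_ge a I ((0 : ℕ), (0 : ℕ))
  have h0 : phiBM a ((0 : ℕ), (0 : ℕ)) = 0 := by simp [phiBM]
  rw [h0] at h1 h2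
  simp only [max_self] at h1
  unfold majBuffers
  omega

end Aux


lemma two_counts_le (l : List ℕ) (a b : ℕ) (h : a ≠ b) :
    l.count a + l.count b ≤ l.length := by
  induction l with
  | nil => simp
  | cons x t ih =>
    simp only [List.count_cons, List.length_cons]
    by_cases hxa : x = a <;> by_cases hxb : x = b <;> simp_all <;> omega

lemma count_mem_pos (I : List ℕ) (b : ℕ) (hb : b ∈ I) : 1 ≤ I.count b :=
  List.count_pos_iff.2 hb

lemma part1 (I : List ℕ) (h1 : 1 ≤ I.length) :
    eagP I - majP I ≤ (I.length : ℝ) / 2 - 1 / 2 := by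
  set n := I.length with hn
  have hn0 : (0:ℝ) < n := by exact_mod_cast h1
  have hcnt1 : ∀ b ∈ I, 1 ≤ I.count b := fun b hb => count_mem_pos I b hb
  by_cases hM : ∀ b ∈ I, I.count b ≤ (n+1)/2
  · -- no strict majority
    have hE : eagP I ≤ (((n+1)/2 : ℕ) : ℝ) := by
      rw [eagP, profit_eq]
      have hs := sum_counts_le I (eagRun I) ((n+1)/2)
        (fun b hb => hM b (eagRun_subset I b hb))
      rw [eagRun_length] at hs
      rw [div_le_iff₀ hn0]
      calc ((eagRun I).map fun b => (I.count b : ℝ)).sum ≤ (n:ℝ) * ((n+1)/2 : ℕ) := hs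
        _ = (((n+1)/2 : ℕ) : ℝ) * n := by ring
    have hMj : (1:ℝ) ≤ majP I := by
      rw [majP, profit_eq]
      rw [le_div_iff₀ hn0, one_mul]
      have hs : ((majBuffers I).length : ℝ) * 1 ≤
          (((majBuffers I).map fun b => (I.count b : ℝ)).sum) := by
        have := List.card_nsmul_le_sum ((majBuffers I).map fun b => (I.count b : ℝ)) 1 ?_
        · simpa [nsmul_eq_mul] using this
        · intro x hx
          simp only [List.mem_map] at hx
          obtain ⟨b, hb, rfl⟩ := hx
          exact_mod_cast hcnt1 b (majBuffers_subset I b hb)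
      rw [majBuffers_length] at hs
      calc (n:ℝ) = (n:ℝ) * 1 := by ring
        _ ≤ _ := hs
    have hk : ((((n+1)/2 : ℕ)) : ℝ) ≤ ((n:ℝ)+1)/2 := by
      have h2 : ((n+1)/2 : ℕ) * 2 ≤ n+1 := by omega
      have : (((n+1)/2 : ℕ) : ℝ) * 2 ≤ (n:ℝ) + 1 := by exact_mod_cast h2
      linarith
    linarith
  · -- strict majority item a
    push_neg at hM
    obtain ⟨a, haI, haM⟩ := hM
    set M := I.count a with hMdef
    have hM1 : n + 2 ≤ 2 * M := by omega
    have hMn : M ≤ n := List.count_le_length (a := a) (l := I)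
    have hallM : ∀ b ∈ I, I.count b ≤ M := by
      intro b hb
      by_cases hba : b = a
      · subst hba; exact le_rfl
      · have := two_counts_le I a b (fun h => hba h.symm)
        omega
    have hEa : eagP I ≤ (M:ℝ) := by
      rw [eagP, profit_eq]
      have hs := sum_counts_le I (eagRun I) M (fun b hb => hallM b (eagRun_subset I b hb))
      rw [eagRun_length] at hs
      rw [div_le_iff₀ hn0]
      calc ((eagRun I).map fun b => (I.count b : ℝ)).sum ≤ (n:ℝ) * M := hs
        _ = (M:ℝ) * n := by ring
    set s := (majBuffers I).count a with hsdef
    have hs1 : (2*M:ℤ) - n ≤ s := by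
      have := maj_count_ge I a
      rw [← hMdef, ← hn, ← hsdef] at this
      omega
    have hs2 : s ≤ n := by
      have h := List.count_le_length (a := a) (l := majBuffers I)
      rw [majBuffers_length] at h
      exact h
    have hMj : ((s:ℝ) * M + ((n:ℝ) - s)) / n ≤ majP I := by
      rw [majP, profit_eq]
      have hs := sum_counts_ge I (majBuffers I) a
        (fun b hb => hcnt1 b (majBuffers_subset I b hb))
      rw [majBuffers_length, ← hsdef, ← hMdef, ← hn] at hs
      gcongr
    have hs1' : (2*(M:ℝ) - n) ≤ s := by exact_mod_cast hs1
    have hs2' : (s:ℝ) ≤ n := by exact_mod_cast hs2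
    have hM1r : (1:ℝ) ≤ M := by exact_mod_cast hcnt1 a haI
    have hMnr : (M:ℝ) ≤ n := by exact_mod_cast hMn
    have hM1r' : (n:ℝ) + 2 ≤ 2*M := by exact_mod_cast hM1
    have key : (n:ℝ) * M - ((s:ℝ)*M + ((n:ℝ) - s)) ≤ (n:ℝ) * ((n:ℝ)/2 - 1/2) := by
      nlinarith [sq_nonneg (2*(M:ℝ) - n - 1),
        mul_nonneg (sub_nonneg.2 hM1r) (sub_nonneg.2 hs1')]
    have hfin : (M:ℝ) - ((s:ℝ)*M + ((n:ℝ) - s))/n ≤ (n:ℝ)/2 - 1/2 := by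
      have e1 : (M:ℝ) - ((s:ℝ)*M + ((n:ℝ) - s))/n
          = ((n:ℝ)*M - ((s:ℝ)*M + ((n:ℝ) - s)))/n := by
        field_simp
      rw [e1]
      calc ((n:ℝ)*M - ((s:ℝ)*M + ((n:ℝ) - s)))/n ≤ ((n:ℝ) * ((n:ℝ)/2 - 1/2))/n := by
            gcongr
        _ = (n:ℝ)/2 - 1/2 := by field_simp
    linarith


def witTail : ℕ → List ℕ
  | 0 => []
  | j+1 => (j+3) :: 0 :: witTail j

lemma witTail_length (j : ℕ) : (witTail j).length = 2*j := by
  induction j with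
  | zero => simp [witTail]
  | succ j ih => simp only [witTail, List.length_cons, ih]; omega

lemma witTail_count0 (j : ℕ) : (witTail j).count 0 = j := by
  induction j with
  | zero => simp [witTail]
  | succ j ih =>
    simp only [witTail, List.count_cons, ih, beq_iff_eq]
    norm_num

lemma witTail_count_big (j x : ℕ) (hx : 3 ≤ x) :
    (witTail j).count x = if x < j + 3 then 1 else 0 := by
  induction j with
  | zero =>
    simp only [witTail, List.count_nil]
    rw [if_neg (by omega)]
  | succ j ih =>
    simp only [witTail, List.count_cons, ih, beq_iff_eq]
    split_ifs <;> omega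

lemma witTail_count_small (j x : ℕ) (h0 : x ≠ 0) (h3 : x < 3) :
    (witTail j).count x = 0 := by
  induction j with
  | zero => simp [witTail]
  | succ j ih =>
    simp only [witTail, List.count_cons, ih, beq_iff_eq]
    split_ifs <;> omega

lemma scanl_cons_head (st : ℕ × ℕ) (l : List ℕ) :
    List.scanl majStep st l = st :: (List.scanl majStep st l).tail := by
  cases l <;> simp [List.scanl]

lemma witW_count0 (J : ℕ) : (0::0::1::2::witTail J : List ℕ).count 0 = J + 2 := by
  simp only [List.count_cons, witTail_count0, beq_iff_eq]
  norm_num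

lemma witW_count_big (J k : ℕ) (hk : k < J) :
    (0::0::1::2::witTail J : List ℕ).count (k+3) = 1 := by
  simp only [List.count_cons, witTail_count_big J (k+3) (by omega), beq_iff_eq]
  rw [if_pos (by omega)]
  norm_num

lemma wit_maj_sum (J : ℕ) : ∀ j, j ≤ J → ∀ b : ℕ,
    ((((List.scanl majStep (b,0) (witTail j)).tail.map Prod.fst)).map
      (fun y => (((0::0::1::2::witTail J : List ℕ).count y : ℕ) : ℝ))).sum = 2*j := by
  intro j
  induction j with
  | zero => intro _ b; simp [witTail, List.scanl]
  | succ j ih =>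
    intro hj b
    have h1 : majStep (b,0) (j+3) = (j+3, 1) := by simp [majStep]
    have h2 : majStep ((j+3 : ℕ), (1:ℕ)) 0 = (j+3, 0) := by
      simp only [majStep]
      norm_num
    rw [witTail]
    rw [List.scanl_cons, List.scanl_cons, h1, h2, List.tail_cons]
    rw [scanl_cons_head (j+3, 0) (witTail j), List.map_cons, List.map_cons,
      List.map_cons, List.map_cons, List.sum_cons, List.sum_cons]
    rw [ih (by omega) (j+3)]
    simp only [witW_count_big J j (by omega)]
    push_cast
    ring

lemma wit_majBuffers (J : ℕ) :
    majBuffers (0::0::1::2::witTail J) =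
      0::0::0::0::((List.scanl majStep ((0:ℕ),(0:ℕ)) (witTail J)).tail.map Prod.fst) := by
  have h1 : majStep ((0:ℕ),(0:ℕ)) 0 = (0, 1) := by simp [majStep]
  have h2 : majStep ((0:ℕ),(1:ℕ)) 0 = (0, 2) := by simp [majStep]
  have h3 : majStep ((0:ℕ),(2:ℕ)) 1 = (0, 1) := by simp [majStep]
  have h4 : majStep ((0:ℕ),(1:ℕ)) 2 = (0, 0) := by simp [majStep]
  unfold majBuffers
  rw [List.scanl_cons, List.scanl_cons, List.scanl_cons, List.scanl_cons, h1, h2, h3, h4, List.tail_cons]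
  rw [scanl_cons_head ((0:ℕ),(0:ℕ)) (witTail J)]
  simp

lemma wit_majP (J : ℕ) :
    majP (0::0::1::2::witTail J) = ((6*J + 8 : ℕ) : ℝ) / ((2*J+4 : ℕ) : ℝ) := by
  rw [majP, profit_eq, wit_majBuffers]
  rw [List.map_cons, List.map_cons, List.map_cons, List.map_cons,
    List.sum_cons, List.sum_cons, List.sum_cons, List.sum_cons]
  rw [wit_maj_sum J J le_rfl 0]
  rw [witW_count0]
  have hlen : (0::0::1::2::witTail J : List ℕ).length = 2*J+4 := by
    simp only [List.length_cons, witTail_length]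
  rw [hlen]
  push_cast
  ring_nf

lemma wit_eagP (J : ℕ) :
    eagP (0::0::1::2::witTail J) = ((J+2 : ℕ) : ℝ) := by
  have hrl : (1::2::witTail J : List ℕ).length = 2*J+2 := by
    simp only [List.length_cons, witTail_length]
  have he : eagRun (0::0::1::2::witTail J) = 0 :: List.replicate (2*J+3) 0 := by
    rw [eagRun, if_pos rfl, hrl]
  rw [eagP, profit_eq, he]
  rw [List.map_cons, List.sum_cons, List.map_replicate, List.sum_replicate]
  rw [witW_count0]
  have hlen : (0::0::1::2::witTail J : List ℕ).length = 2*J+4 := by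
    simp only [List.length_cons, witTail_length]
  rw [hlen]
  have h4 : (0:ℝ) < ((2*J+4 : ℕ) : ℝ) := by positivity
  rw [nsmul_eq_mul]
  push_cast at h4 ⊢
  field_simp
  ring

lemma part2 (n : ℕ) (hev : Even n) (hn : 2 ≤ n) :
    ∃ I : List ℕ, I.length = n ∧ eagP I - majP I = (n : ℝ) / 2 - 3 + 4 / n := by
  by_cases h2 : n = 2
  · subst h2
    refine ⟨[0,0], by simp, ?_⟩
    have he : eagRun [0,0] = [0,0] := by rw [eagRun]; simp
    have hm : majBuffers [0,0] = [0,0] := by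
      simp only [majBuffers]
      rw [List.scanl_cons, List.scanl_cons]
      norm_num [majStep, List.scanl]
    rw [eagP, majP, he, hm]
    norm_num
  · obtain ⟨J, rfl⟩ : ∃ J, n = 2*J + 4 := by
      obtain ⟨k, hk⟩ := hev
      exact ⟨k - 2, by omega⟩
    refine ⟨0::0::1::2::witTail J, by simp only [List.length_cons, witTail_length], ?_⟩
    rw [wit_eagP, wit_majP]
    have h4 : (0:ℝ) < ((2*J+4 : ℕ) : ℝ) := by positivity
    push_cast at h4 ⊢
    field_simp
    ring


/-! ### witness for limsup : 0,0,1,1,...,1 -/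

lemma eseq_tail_buf (k : ℕ) : ∀ st : ℕ × ℕ, st.1 = 1 ∨ st.2 = 0 →
    (List.scanl majStep st (List.replicate k 1)).tail.map Prod.fst
      = List.replicate k 1 := by
  induction k with
  | zero => intro st _; simp [List.scanl]
  | succ k ih =>
    intro st hst
    rw [List.replicate_succ, List.scanl_cons, List.tail_cons]
    have h1 : (majStep st 1).1 = 1 := by
      unfold majStep
      split_ifs with h h' <;> simp_all
    rw [scanl_cons_head (majStep st 1) _, List.map_cons, h1,
      ih (majStep st 1) (Or.inl h1)]

lemma eseq_majBuffers (k : ℕ) :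
    majBuffers (0::0::1::1::List.replicate k 1) = 0::0::0::0::List.replicate k 1 := by
  have h1 : majStep ((0:ℕ),(0:ℕ)) 0 = (0, 1) := by simp [majStep]
  have h2 : majStep ((0:ℕ),(1:ℕ)) 0 = (0, 2) := by simp [majStep]
  have h3 : majStep ((0:ℕ),(2:ℕ)) 1 = (0, 1) := by simp [majStep]
  have h4 : majStep ((0:ℕ),(1:ℕ)) 1 = (0, 0) := by simp [majStep]
  unfold majBuffers
  rw [List.scanl_cons, List.scanl_cons, List.scanl_cons, List.scanl_cons, h1, h2, h3, h4, List.tail_cons]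
  rw [scanl_cons_head ((0:ℕ),(0:ℕ)) _]
  simp only [List.map_cons, Prod.fst]
  rw [eseq_tail_buf k ((0:ℕ),(0:ℕ)) (Or.inr rfl)]

lemma eseq_diff (k : ℕ) :
    majP (0::0::1::1::List.replicate k 1) - eagP (0::0::1::1::List.replicate k 1)
      = ((k:ℝ))^2 / ((k:ℝ) + 4) := by
  set E : List ℕ := 0::0::1::1::List.replicate k 1 with hE
  have hlen : E.length = k + 4 := by simp [hE]
  have hc0 : E.count 0 = 2 := by
    simp [hE, List.count_cons, List.count_replicate]
  have hc1 : E.count 1 = k + 2 := by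
    simp [hE, List.count_cons, List.count_replicate]
  have hk4 : (0:ℝ) < (k:ℝ) + 4 := by positivity
  have hmaj : majP E = (8 + (k:ℝ) * (k + 2)) / ((k:ℝ) + 4) := by
    rw [majP, profit_eq, hE]
    rw [eseq_majBuffers k]
    rw [List.map_cons, List.map_cons, List.map_cons, List.map_cons,
      List.sum_cons, List.sum_cons, List.sum_cons, List.sum_cons,
      List.map_replicate, List.sum_replicate]
    rw [← hE, hc0, hc1, hlen, nsmul_eq_mul]
    push_cast
    ring
  have heag : eagP E = 2 := by
    have he : eagRun E = 0 :: List.replicate (k + 3) 0 := by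
      rw [hE, eagRun, if_pos rfl]
      congr 1
      simp
    rw [eagP, profit_eq, he]
    rw [List.map_cons, List.sum_cons, List.map_replicate, List.sum_replicate]
    rw [hc0, hlen, nsmul_eq_mul]
    push_cast
    field_simp
    ring
  rw [hmaj, heag]
  field_simp
  ring

/-! ### bounds on minDiff and maxDiff -/

lemma diff_zero_mem (n : ℕ) :
    (0:ℝ) ∈ {d | ∃ I : List ℕ, I.length = n ∧ d = majP I - eagP I} := by
  refine ⟨List.replicate n 0, by simp, ?_⟩
  have h1 : majBuffers (List.replicate n 0) = List.replicate n 0 := by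
    have hlen : (majBuffers (List.replicate n 0)).length = n := by
      rw [majBuffers_length, List.length_replicate]
    conv_rhs => rw [← hlen]
    exact List.eq_replicate_length.2
      (fun b hb => List.eq_of_mem_replicate (majBuffers_subset _ b hb))
  have h2 : eagRun (List.replicate n 0) = List.replicate n 0 := by
    have hlen : (eagRun (List.replicate n 0)).length = n := by
      rw [eagRun_length, List.length_replicate]
    conv_rhs => rw [← hlen]
    exact List.eq_replicate_length.2
      (fun b hb => List.eq_of_mem_replicate (eagRun_subset _ b hb))
  rw [majP, eagP, h1, h2]
  ring

lemma diff_set_bddAbove (n : ℕ) :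
    ∀ x ∈ {d | ∃ I : List ℕ, I.length = n ∧ d = majP I - eagP I}, x ≤ (n:ℝ) := by
  rintro x ⟨I, hI, rfl⟩
  have h1 : majP I ≤ (n:ℝ) := by
    have := profit_le_length I (majBuffers I)
    rw [majBuffers_length, hI] at this
    exact this
  have h2 : 0 ≤ eagP I := profit_nonneg _ _
  linarith

lemma diff_set_lb (n : ℕ) (hn : 1 ≤ n) :
    ∀ x ∈ {d | ∃ I : List ℕ, I.length = n ∧ d = majP I - eagP I},
      1/2 - (n:ℝ)/2 ≤ x := by
  rintro x ⟨I, hI, rfl⟩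
  have := part1 I (by omega)
  rw [hI] at this
  linarith

/-- Eag(I) − Maj(I) ≤ n/2 − 1/2 for all I; for even n there are
sequences with Eag(I) − Maj(I) = n/2 − 3 + 4/n; hence Min(Maj,Eag) = −1/2 and,
with Max(Maj,Eag) = 1 (witnessed by E_n), l(Maj, Eag) = [−1/2, 1]. -/
theorem stmt16 :
    (∀ I : List ℕ, 1 ≤ I.length → eagP I - majP I ≤ (I.length : ℝ) / 2 - 1 / 2) ∧
    (∀ n : ℕ, Even n → 2 ≤ n →
      ∃ I : List ℕ, I.length = n ∧ eagP I - majP I = (n : ℝ) / 2 - 3 + 4 / n) ∧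
    Filter.liminf (fun n => minDiff majP eagP n / (n : ℝ)) Filter.atTop = -(1 / 2) ∧
    Filter.limsup (fun n => maxDiff majP eagP n / (n : ℝ)) Filter.atTop = 1 := by
  have hne : ∀ n : ℕ, {d | ∃ I : List ℕ, I.length = n ∧ d = majP I - eagP I}.Nonempty :=
    fun n => ⟨0, diff_zero_mem n⟩
  have hba : ∀ n : ℕ, BddAbove {d | ∃ I : List ℕ, I.length = n ∧ d = majP I - eagP I} :=
    fun n => ⟨(n:ℝ), fun x hx => diff_set_bddAbove n x hx⟩
  have hbb : ∀ n : ℕ, 1 ≤ n →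
      BddBelow {d | ∃ I : List ℕ, I.length = n ∧ d = majP I - eagP I} :=
    fun n hn => ⟨1/2 - (n:ℝ)/2, fun x hx => diff_set_lb n hn x hx⟩
  -- bounds on minDiff
  have hmlb : ∀ n : ℕ, 1 ≤ n → 1/2 - (n:ℝ)/2 ≤ minDiff majP eagP n :=
    fun n hn => le_csInf (hne n) (diff_set_lb n hn)
  have hm0 : ∀ n : ℕ, 1 ≤ n → minDiff majP eagP n ≤ 0 :=
    fun n hn => csInf_le (hbb n hn) (diff_zero_mem n)
  set f : ℕ → ℝ := fun n => minDiff majP eagP n / (n : ℝ) with hf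
  have hflb : ∀ n : ℕ, -(1/2) ≤ f n := by
    intro n
    rcases Nat.eq_zero_or_pos n with rfl | hn
    · simp [hf]
    have hn0 : (0:ℝ) < n := by exact_mod_cast hn
    rw [hf]
    rw [le_div_iff₀ hn0]
    have := hmlb n hn
    linarith
  have hfub : ∀ n : ℕ, f n ≤ 0 := by
    intro n
    rcases Nat.eq_zero_or_pos n with rfl | hn
    · simp [hf]
    have hn0 : (0:ℝ) < n := by exact_mod_cast hn
    rw [hf, div_le_iff₀ hn0]
    have := hm0 n hn
    linarith
  have heven : ∀ m : ℕ, f (2*m+4) ≤ -(1/2) + 3/((2*m+4 : ℕ):ℝ) := by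
    intro m
    set n : ℕ := 2*m+4 with hndef
    have hn0 : (0:ℝ) < (n:ℕ) := by positivity
    obtain ⟨I, hIlen, hIval⟩ := part2 n ⟨m+2, by omega⟩ (by omega)
    have hmem : -((n:ℝ)/2 - 3 + 4/(n:ℝ)) ∈
        {d | ∃ I : List ℕ, I.length = n ∧ d = majP I - eagP I} :=
      ⟨I, hIlen, by linarith⟩
    have h1 : minDiff majP eagP n ≤ -((n:ℝ)/2 - 3 + 4/(n:ℝ)) :=
      csInf_le (hbb n (by omega)) hmem
    have h2 : f n ≤ (-((n:ℝ)/2 - 3 + 4/(n:ℝ)))/(n:ℝ) := by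
      show minDiff majP eagP n / (n:ℝ) ≤ _
      gcongr
    have h3 : (-((n:ℝ)/2 - 3 + 4/(n:ℝ)))/(n:ℝ) = -(1/2) + 3/(n:ℝ) - 4/(n:ℝ)^2 := by
      field_simp
      ring
    have h4 : (0:ℝ) < 4/(n:ℝ)^2 := by positivity
    rw [h3] at h2
    linarith
  have hbddge : Filter.IsBoundedUnder (· ≥ ·) Filter.atTop f :=
    Filter.isBoundedUnder_of ⟨-(1/2), fun n => hflb n⟩
  have hbddle : Filter.IsBoundedUnder (· ≤ ·) Filter.atTop f :=
    Filter.isBoundedUnder_of ⟨0, fun n => hfub n⟩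
  have hcob : Filter.IsCoboundedUnder (· ≥ ·) Filter.atTop f :=
    hbddle.isCoboundedUnder_ge
  have hliminf : Filter.liminf f Filter.atTop = -(1/2) := by
    apply le_antisymm
    · apply le_of_forall_pos_le_add
      intro ε hε
      apply Filter.liminf_le_of_frequently_le ?_ hbddge
      rw [Filter.frequently_atTop]
      intro N
      refine ⟨2*(max N ⌈3/ε⌉₊)+4, by
        have := le_max_left N ⌈3/ε⌉₊; omega, ?_⟩
      have h1 := heven (max N ⌈3/ε⌉₊)
      have h2 : 3/((2*(max N ⌈3/ε⌉₊)+4 : ℕ):ℝ) ≤ ε := by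
        have hc : (3:ℝ)/ε ≤ ⌈3/ε⌉₊ := Nat.le_ceil _
        have hcast : ((⌈3/ε⌉₊ : ℕ):ℝ) ≤ ((2*(max N ⌈3/ε⌉₊)+4 : ℕ):ℝ) := by
          have : (⌈3/ε⌉₊ : ℕ) ≤ 2*(max N ⌈3/ε⌉₊)+4 := by
            have := le_max_right N ⌈3/ε⌉₊; omega
          exact_mod_cast this
        have hX : (3:ℝ)/ε ≤ ((2*(max N ⌈3/ε⌉₊)+4 : ℕ):ℝ) := le_trans hc hcast
        have hX0 : (0:ℝ) < ((2*(max N ⌈3/ε⌉₊)+4 : ℕ):ℝ) := by positivity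
        rw [div_le_iff₀ hX0]
        rw [div_le_iff₀ hε] at hX
        linarith [mul_comm ε ((2*(max N ⌈3/ε⌉₊)+4 : ℕ):ℝ)]
      linarith
    · exact Filter.le_liminf_of_le hcob (Filter.Eventually.of_forall hflb)
  -- limsup
  set g : ℕ → ℝ := fun n => maxDiff majP eagP n / (n : ℝ) with hg
  have hgub : ∀ n : ℕ, g n ≤ 1 := by
    intro n
    rcases Nat.eq_zero_or_pos n with rfl | hn
    · simp [hg]
    have hn0 : (0:ℝ) < n := by exact_mod_cast hn
    rw [hg, div_le_one hn0]
    exact csSup_le (hne n) (diff_set_bddAbove n)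
  have hglb : ∀ k : ℕ, 1 - 8/((k+4 : ℕ):ℝ) ≤ g (k+4) := by
    intro k
    have h4 : (0:ℝ) < (k:ℝ)+4 := by positivity
    have hcast : ((k+4 : ℕ):ℝ) = (k:ℝ)+4 := by push_cast; ring
    have hmem : ((k:ℝ))^2/((k:ℝ)+4) ∈
        {d | ∃ I : List ℕ, I.length = k+4 ∧ d = majP I - eagP I} := by
      refine ⟨0::0::1::1::List.replicate k 1, ?_, (eseq_diff k).symm⟩
      simp
    have h1 : ((k:ℝ))^2/((k:ℝ)+4) ≤ maxDiff majP eagP (k+4) := le_csSup (hba _) hmem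
    have h2 : (((k:ℝ))^2/((k:ℝ)+4))/((k+4:ℕ):ℝ) ≤ g (k+4) := by
      show _ ≤ maxDiff majP eagP (k+4) / ((k+4:ℕ):ℝ)
      gcongr
    have h3 : 1 - 8/((k+4 : ℕ):ℝ) ≤ (((k:ℝ))^2/((k:ℝ)+4))/((k+4:ℕ):ℝ) := by
      rw [hcast]
      have e1 : (1:ℝ) - 8/((k:ℝ)+4) = (((k:ℝ)+4)^2 - 8*((k:ℝ)+4))/((k:ℝ)+4)^2 := by
        field_simp
      have e2 : (((k:ℝ))^2/((k:ℝ)+4))/((k:ℝ)+4) = ((k:ℝ))^2/((k:ℝ)+4)^2 := by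
        rw [div_div]
        ring_nf
      rw [e1, e2]
      gcongr
      nlinarith
    linarith
  have hlower : Filter.Tendsto (fun n : ℕ => 1 - 8/(n:ℝ)) Filter.atTop (nhds 1) := by
    have := Filter.Tendsto.sub (tendsto_const_nhds (x := (1:ℝ)) (f := Filter.atTop))
      (tendsto_const_div_atTop_nhds_zero_nat 8)
    simpa using this
  have hgt : Filter.Tendsto g Filter.atTop (nhds 1) := by
    apply tendsto_of_tendsto_of_tendsto_of_le_of_le' hlower tendsto_const_nhds
    · rw [Filter.eventually_atTop]
      refine ⟨4, fun n hn => ?_⟩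
      obtain ⟨k, rfl⟩ : ∃ k, n = k + 4 := ⟨n - 4, by omega⟩
      have := hglb k
      have hcast : ((k+4 : ℕ):ℝ) = (k:ℝ)+4 := by push_cast; ring
      rw [hcast] at this
      convert this using 2
      · rfl
      push_cast
      ring
    · exact Filter.Eventually.of_forall hgub
  exact ⟨part1, part2, hliminf, hgt.limsup_eq⟩
end

section
/- For every sequence I, the worst permutation of I for Opt is the ordering D(I) of the items in nondecreasing order of frequency, and on D(I) Opt's profit equals Nai's profit; hence Opt_W(I) = Nai_W(I) = Nai(I), i.e., Nai and Opt are equivalent under relative worst order analysis. -/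
open scoped BigOperators

section Aux

lemma freq_nonneg (I : List ℕ) (a : ℕ) : 0 ≤ freq I a := by
  unfold freq; positivity

lemma freq_le_one (I : List ℕ) (a : ℕ) : freq I a ≤ 1 := by
  unfold freq
  rcases Nat.eq_zero_or_pos I.length with h | h
  · simp [h]
  · rw [div_le_one (by exact_mod_cast h)]
    exact_mod_cast I.count_le_length (a := a)

lemma sum_map_eq (f : ℕ → ℝ) :
    ∀ S : List ℕ, (S.map f).sum = ∑ i ∈ Finset.range S.length, f (S.getD i 0)
  | [] => by simp
  | a :: t => by
    simp only [List.map_cons, List.sum_cons, List.length_cons]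
    rw [Finset.sum_range_succ']
    simp only [List.getD_cons_succ, List.getD_cons_zero]
    rw [sum_map_eq f t]
    ring

lemma freq_perm {J I : List ℕ} (h : J.Perm I) : freq J = freq I := by
  funext a
  unfold freq
  rw [h.count_eq, h.length_eq]

lemma naiP_perm {J I : List ℕ} (h : J.Perm I) : naiP J = naiP I := by
  unfold naiP profit
  rw [freq_perm h]
  exact List.Perm.sum_eq (h.map _)

lemma validSched_self (J : List ℕ) : ValidSched J J :=
  ⟨rfl, fun i _ => Or.inl rfl⟩

lemma profit_le_length_s17 {J S : List ℕ} (hs : ValidSched J S) :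
    profit J S ≤ (J.length : ℝ) := by
  unfold profit
  rw [sum_map_eq, hs.1]
  calc ∑ i ∈ Finset.range J.length, freq J (S.getD i 0)
      ≤ ∑ _i ∈ Finset.range J.length, (1 : ℝ) :=
        Finset.sum_le_sum fun i _ => freq_le_one J _
    _ = J.length := by simp

lemma bddAbove_sched (J : List ℕ) :
    BddAbove {x | ∃ S, ValidSched J S ∧ x = profit J S} := by
  refine ⟨(J.length : ℝ), fun x hx => ?_⟩
  obtain ⟨S, hS, rfl⟩ := hx
  exact profit_le_length_s17 hS

lemma naiP_le_optP (J : List ℕ) : naiP J ≤ optP J :=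
  le_csSup (bddAbove_sched J) ⟨J, validSched_self J, rfl⟩

lemma Dsort_perm (I : List ℕ) : (Dsort I).Perm I :=
  List.perm_insertionSort _ I

lemma Dsort_sorted (I : List ℕ) :
    (Dsort I).Pairwise (fun x y => (Dsort I).count x ≤ (Dsort I).count y) := by
  have hperm := Dsort_perm I
  set r : ℕ → ℕ → Prop := fun x y => I.count x ≤ I.count y with hr
  haveI : Std.Total r := ⟨fun a b => le_total _ _⟩
  haveI : IsTrans ℕ r := ⟨fun a b c => le_trans⟩
  have h : List.Pairwise r (Dsort I) := List.pairwise_insertionSort r I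
  refine h.imp fun {x y} hxy => ?_
  rwa [hperm.count_eq, hperm.count_eq]

lemma sched_pointwise {J S : List ℕ} (hs : ValidSched J S)
    (hsort : J.Pairwise (fun x y => J.count x ≤ J.count y)) :
    ∀ i, i < S.length → freq J (S.getD i 0) ≤ freq J (J.getD i 0) := by
  intro i
  induction i using Nat.strong_induction_on with
  | _ i ih =>
    intro hi
    rcases hs.2 i hi with h | ⟨hpos, h⟩
    · rw [h]
    · rw [h]
      have h1 : i - 1 < i := Nat.sub_lt hpos one_pos
      refine (ih (i - 1) h1 (lt_trans h1 hi)).trans ?_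
      have hi' : i < J.length := hs.1 ▸ hi
      have h1' : i - 1 < J.length := lt_trans h1 hi'
      have hcount : J.count (J.get ⟨i - 1, h1'⟩) ≤ J.count (J.get ⟨i, hi'⟩) :=
        (List.pairwise_iff_get.mp hsort) ⟨i - 1, h1'⟩ ⟨i, hi'⟩ h1
      rw [List.getD_eq_get (i := ⟨i - 1, h1'⟩), List.getD_eq_get (i := ⟨i, hi'⟩)]
      unfold freq
      have hlen : (0 : ℝ) < J.length := by
        exact_mod_cast Nat.zero_lt_of_lt hi'
      gcongr

lemma optP_Dsort_eq (I : List ℕ) : optP (Dsort I) = naiP (Dsort I) := by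
  set J := Dsort I with hJ
  refine le_antisymm ?_ (naiP_le_optP J)
  refine csSup_le ⟨naiP J, J, validSched_self J, rfl⟩ ?_
  rintro x ⟨S, hS, rfl⟩
  unfold profit naiP profit
  rw [sum_map_eq, sum_map_eq, hS.1]
  refine Finset.sum_le_sum fun i hi => ?_
  exact sched_pointwise hS (Dsort_sorted I) i (hS.1 ▸ Finset.mem_range.mp hi)

lemma worstP_naiP (I : List ℕ) : worstP naiP I = naiP I := by
  unfold worstP
  refine le_antisymm (csInf_le ⟨naiP I, ?_⟩ ⟨I, List.Perm.refl I, rfl⟩)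
    (le_csInf ⟨naiP I, I, List.Perm.refl I, rfl⟩ ?_)
  · rintro x ⟨J, hJ, rfl⟩
    exact le_of_eq (naiP_perm hJ).symm
  · rintro x ⟨J, hJ, rfl⟩
    exact le_of_eq (naiP_perm hJ).symm

lemma worstP_optP (I : List ℕ) : worstP optP I = optP (Dsort I) := by
  unfold worstP
  have key : ∀ J : List ℕ, J.Perm I → optP (Dsort I) ≤ optP J := by
    intro J hJ
    rw [optP_Dsort_eq, naiP_perm (Dsort_perm I)]
    calc naiP I = naiP J := (naiP_perm hJ).symm
      _ ≤ optP J := naiP_le_optP J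
  refine le_antisymm (csInf_le ⟨optP (Dsort I), ?_⟩ ⟨Dsort I, Dsort_perm I, rfl⟩)
    (le_csInf ⟨optP (Dsort I), Dsort I, Dsort_perm I, rfl⟩ ?_)
  · rintro x ⟨J, hJ, rfl⟩
    exact key J hJ
  · rintro x ⟨J, hJ, rfl⟩
    exact key J hJ

end Aux

/-- the worst permutation of I for Opt is D(I), on which Opt's
profit equals Nai's; hence Opt_W(I) = Nai_W(I) = Nai(I): Nai and Opt are
equivalent under relative worst order analysis. -/
theorem stmt17 (I : List ℕ) :
    worstP optP I = optP (Dsort I) ∧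
    optP (Dsort I) = naiP (Dsort I) ∧
    worstP optP I = worstP naiP I ∧
    worstP naiP I = naiP I := by
  refine ⟨worstP_optP I, optP_Dsort_eq I, ?_, worstP_naiP I⟩
  rw [worstP_optP I, optP_Dsort_eq I, worstP_naiP I, naiP_perm (Dsort_perm I)]
end
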